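/- Let k ∈ ℕ, I₀,…,I_k nonempty open intervals, I = I₁ × ⋯ × I_k, f_j : I_j → ℝ strictly increasing for j = 0,…,k, φ : I → I₀ arbitrary, and Φ : I → ℝ separately increasing and upper semicontinuous, with Γ = Φ^{-1}(C_{f₀}) dense in I. If the unweighted inequality A_{f₀}^[n](φ(x₁),…,φ(xₙ)) ≤ Φ(A_{f₁}^[n](x_{1,1},…,x_{n,1}),…,A_{f_k}^[n](x_{1,k},…,x_{n,k})) holds for all n ∈ ℕ and all x₁,…,xₙ ∈ I, then the corresponding weighted inequality holds: for all n, all x₁,…,xₙ ∈ I, and all weights λ ∈ [0,∞)ⁿ \ {0}, Ã_{f₀}^[n](φ(x₁),…,φ(xₙ);λ) ≤ Φ(Ã_{f₁}^[n](x_{1,1},…,x_{n,1};λ),…,Ã_{f_k}^[n](x_{1,k},…,x_{n,k};λ)). -/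

import Mathlib

/-- `g` is the generalized inverse of the strictly increasing function `f : I → ℝ`. -/
def IsGenInv (I : Set ℝ) (f g : ℝ → ℝ) : Prop :=
  Set.MapsTo g (convexHull ℝ (f '' I)) I ∧
  MonotoneOn g (convexHull ℝ (f '' I)) ∧
  ∀ x ∈ I, g (f x) = x




lemma monoOn_continuousOn {s : Set ℝ} {g : ℝ → ℝ}
    (hg : MonotoneOn g s) (him : (g '' s).OrdConnected) : ContinuousOn g s := by
  intro a ha
  rw [ContinuousWithinAt, tendsto_order]
  constructor
  · intro b hb
    rcases em (∃ c ∈ s, c < a ∧ b < g c) with ⟨c, hcs, hca, hbc⟩ | h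
    · filter_upwards [self_mem_nhdsWithin,
        mem_nhdsWithin_of_mem_nhds (Ioi_mem_nhds hca)] with z hzs hzc
      exact hbc.trans_le (hg hcs hzs (le_of_lt hzc))
    · push_neg at h
      have hsub : ∀ z ∈ s, a ≤ z := by
        intro z hz
        by_contra hza; push_neg at hza
        obtain ⟨y, hy1, hy2⟩ := exists_between hb
        have hyim : y ∈ g '' s :=
          him.out ⟨z, hz, rfl⟩ ⟨a, ha, rfl⟩ ⟨(h z hz hza).trans hy1.le, hy2.le⟩
        obtain ⟨c, hcs, hgc⟩ := hyim
        have hca : c < a := by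
          by_contra hac; push_neg at hac
          exact absurd (hg ha hcs hac) (by rw [hgc]; exact not_le.2 hy2)
        exact absurd (h c hcs hca) (by rw [hgc]; exact not_le.2 hy1)
      filter_upwards [self_mem_nhdsWithin] with z hz
      exact hb.trans_le (hg ha hz (hsub z hz))
  · intro b hb
    rcases em (∃ c ∈ s, a < c ∧ g c < b) with ⟨c, hcs, hca, hbc⟩ | h
    · filter_upwards [self_mem_nhdsWithin,
        mem_nhdsWithin_of_mem_nhds (Iio_mem_nhds hca)] with z hzs hzc
      exact (hg hzs hcs (le_of_lt hzc)).trans_lt hbc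
    · push_neg at h
      have hsub : ∀ z ∈ s, z ≤ a := by
        intro z hz
        by_contra hza; push_neg at hza
        obtain ⟨y, hy1, hy2⟩ := exists_between hb
        have hyim : y ∈ g '' s :=
          him.out ⟨a, ha, rfl⟩ ⟨z, hz, rfl⟩ ⟨hy1.le, hy2.le.trans (h z hz hza)⟩
        obtain ⟨c, hcs, hgc⟩ := hyim
        have hca : a < c := by
          by_contra hac; push_neg at hac
          exact absurd (hg hcs ha hac) (by rw [hgc]; exact not_le.2 hy1)
        exact absurd (h c hcs hca) (by rw [hgc]; exact not_le.2 hy2)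
      filter_upwards [self_mem_nhdsWithin] with z hz
      exact (hg hz ha (hsub z hz)).trans_lt hb



def repList {α : Type*} {n : ℕ} (m : Fin n → ℕ) (x : Fin n → α) : List α :=
  (List.finRange n).flatMap fun i => List.replicate (m i) (x i)

lemma repList_length {α : Type*} {n : ℕ} (m : Fin n → ℕ) (x : Fin n → α) :
    (repList m x).length = ∑ i, m i := by
  rw [repList, List.length_flatMap]
  simp only [Function.comp_def, List.length_replicate]
  rw [← List.ofFn_eq_map, List.sum_ofFn]

lemma repList_mem {α : Type*} {n : ℕ} {m : Fin n → ℕ} {x : Fin n → α} {a : α}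
    (ha : a ∈ repList m x) : ∃ i, a = x i := by
  rw [repList, List.mem_flatMap] at ha
  obtain ⟨i, -, hai⟩ := ha
  exact ⟨i, List.eq_of_mem_replicate hai⟩

lemma repList_map_sum {α : Type*} {n : ℕ} (m : Fin n → ℕ) (x : Fin n → α) (h : α → ℝ) :
    ((repList m x).map h).sum = ∑ i, (m i : ℝ) * h (x i) := by
  rw [repList, List.map_flatMap]
  simp only [List.map_replicate]
  rw [List.flatMap, List.sum_flatten, List.map_map]
  simp only [Function.comp_def, List.sum_replicate]
  rw [← List.ofFn_eq_map, List.sum_ofFn]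
  simp [nsmul_eq_mul]

lemma sum_fin_get {α : Type*} (L : List α) (h : α → ℝ) :
    ∑ t, h (L.get t) = (L.map h).sum := by
  calc ∑ t, h (L.get t) = (List.ofFn fun t => h (L.get t)).sum := List.sum_ofFn.symm
    _ = ((List.ofFn L.get).map h).sum := by rw [List.map_ofFn]; rfl
    _ = (L.map h).sum := by rw [List.ofFn_get]

lemma wavg_scale {n : ℕ} {d : ℝ} (hd : d ≠ 0) (v c : Fin n → ℝ) :
    (∑ i, (v i / d) * c i) / (∑ i, v i / d) = (∑ i, v i * c i) / (∑ i, v i) := by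
  have h1 : ∑ i, (v i / d) * c i = (∑ i, v i * c i) / d := by
    rw [Finset.sum_div]; exact Finset.sum_congr rfl fun i _ => div_mul_eq_mul_div _ _ _
  have h2 : (∑ i, v i / d) = (∑ i, v i) / d := (Finset.sum_div _ _ _).symm
  rw [h1, h2, div_div_div_comm, div_self hd, div_one]

lemma wavg_mem {n : ℕ} {w : Fin n → ℝ} (hw : ∀ i, 0 ≤ w i) (hpos : 0 < ∑ i, w i)
    {s : Set ℝ} {c : Fin n → ℝ} (hc : ∀ i, c i ∈ s) :
    (∑ i, w i * c i) / (∑ i, w i) ∈ convexHull ℝ s := by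
  have := Finset.centerMass_mem_convexHull Finset.univ (fun i _ => hw i) hpos (fun i _ => hc i)
  simpa [Finset.centerMass, smul_eq_mul, div_eq_inv_mul, Finset.mul_sum] using this

lemma tendsto_g_avg {n : ℕ} {lam : Fin n → ℝ} (hlam : ∀ i, 0 ≤ lam i)
    (hpos : 0 < ∑ i, lam i)
    {W : ℕ → Fin n → ℝ} (hWnn : ∀ t i, 0 ≤ W t i)
    (hWten : ∀ i, Filter.Tendsto (fun t => W t i) Filter.atTop (nhds (lam i)))
    (hWpos : ∀ᶠ t in Filter.atTop, 0 < ∑ i, W t i)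
    {G : ℝ → ℝ} {S : Set ℝ} (hG : ContinuousOn G (convexHull ℝ S))
    {c : Fin n → ℝ} (hc : ∀ i, c i ∈ S) :
    Filter.Tendsto (fun t => G ((∑ i, W t i * c i) / ∑ i, W t i)) Filter.atTop
      (nhds (G ((∑ i, lam i * c i) / ∑ i, lam i))) ∧
    ((∑ i, lam i * c i) / ∑ i, lam i ∈ convexHull ℝ S) ∧
    (∀ᶠ t in Filter.atTop, (∑ i, W t i * c i) / ∑ i, W t i ∈ convexHull ℝ S) := by
  have hmemlim := wavg_mem hlam hpos hc
  have hevmem : ∀ᶠ t in Filter.atTop, (∑ i, W t i * c i) / ∑ i, W t i ∈ convexHull ℝ S := by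
    filter_upwards [hWpos] with t ht
    exact wavg_mem (hWnn t) ht hc
  have h1 : Filter.Tendsto (fun t => (∑ i, W t i * c i) / ∑ i, W t i) Filter.atTop
      (nhds ((∑ i, lam i * c i) / ∑ i, lam i)) :=
    Filter.Tendsto.div
      (tendsto_finset_sum _ fun i _ => (hWten i).mul_const _)
      (tendsto_finset_sum _ fun i _ => hWten i) (ne_of_gt hpos)
  have h2 := tendsto_nhdsWithin_of_tendsto_nhds_of_eventually_within _ h1 hevmem
  exact ⟨(hG _ hmemlim).tendsto.comp h2, hmemlim, hevmem⟩

open Set Filter Topology in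
theorem stmt_4 (k : ℕ) (hk : 0 < k)
    (I0 : Set ℝ) (I : Fin k → Set ℝ)
    (hI0o : IsOpen I0) (hI0c : I0.OrdConnected) (hI0n : I0.Nonempty)
    (hIo : ∀ j, IsOpen (I j)) (hIc : ∀ j, (I j).OrdConnected) (hIn : ∀ j, (I j).Nonempty)
    (f0 : ℝ → ℝ) (f : Fin k → ℝ → ℝ) (g0 : ℝ → ℝ) (g : Fin k → ℝ → ℝ)
    (hf0 : StrictMonoOn f0 I0) (hf : ∀ j, StrictMonoOn (f j) (I j))
    (hg0 : IsGenInv I0 f0 g0) (hg : ∀ j, IsGenInv (I j) (f j) (g j))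
    (φ Φ : (Fin k → ℝ) → ℝ)
    (hφ : Set.MapsTo φ (Set.univ.pi I) I0)
    (hΦmono : ∀ u v : Fin k → ℝ, (∀ j, u j ∈ I j) → (∀ j, v j ∈ I j) → u ≤ v → Φ u ≤ Φ v)
    (hΦusc : UpperSemicontinuousOn Φ (Set.univ.pi I))
    (hdense : Set.univ.pi I ⊆
      closure {t : Fin k → ℝ | (∀ j, t j ∈ I j) ∧ ContinuousWithinAt f0 I0 (Φ t)})
    (ha : ∀ n : ℕ, 0 < n → ∀ x : Fin n → Fin k → ℝ, (∀ i j, x i j ∈ I j) →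
      g0 ((∑ i, f0 (φ (x i))) / n) ≤ Φ (fun j => g j ((∑ i, f j (x i j)) / n))) :
    ∀ n : ℕ, ∀ x : Fin n → Fin k → ℝ, (∀ i j, x i j ∈ I j) →
      ∀ lam : Fin n → ℝ, (∀ i, 0 ≤ lam i) → (∑ i, lam i) ≠ 0 →
        g0 ((∑ i, lam i * f0 (φ (x i))) / ∑ i, lam i) ≤
          Φ (fun j => g j ((∑ i, lam i * f j (x i j)) / ∑ i, lam i)) := by
  intro n x hx lam hlam hsum
  -- basic memberships
  have hxpi : ∀ i, x i ∈ Set.univ.pi I := fun i => by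
    intro j _; exact hx i j
  have hxa : ∀ i, φ (x i) ∈ I0 := fun i => hφ (hxpi i)
  have ha0 : ∀ i, f0 (φ (x i)) ∈ f0 '' I0 := fun i => ⟨_, hxa i, rfl⟩
  have hbj : ∀ (j : Fin k) i, f j (x i j) ∈ f j '' (I j) := fun j i => ⟨_, hx i j, rfl⟩
  have hpos : 0 < ∑ i, lam i :=
    lt_of_le_of_ne (Finset.sum_nonneg fun i _ => hlam i) (Ne.symm hsum)
  obtain ⟨i0, -, hi0⟩ : ∃ i ∈ Finset.univ, (0:ℝ) < lam i :=
    Finset.exists_lt_of_sum_lt (by simpa using hpos)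
  -- continuity of the generalized inverses
  have himg : ∀ (J : Set ℝ) (F G : ℝ → ℝ), IsGenInv J F G →
      G '' (convexHull ℝ (F '' J)) = J := by
    intro J F G hG
    refine subset_antisymm hG.1.image_subset fun z hz => ?_
    exact ⟨F z, subset_convexHull ℝ _ ⟨z, hz, rfl⟩, hG.2.2 z hz⟩
  have hc0 : ContinuousOn g0 (convexHull ℝ (f0 '' I0)) := by
    refine monoOn_continuousOn hg0.2.1 ?_
    rw [himg _ _ _ hg0]; exact hI0c
  have hcj : ∀ j, ContinuousOn (g j) (convexHull ℝ (f j '' (I j))) := by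
    intro j
    refine monoOn_continuousOn (hg j).2.1 ?_
    rw [himg _ _ _ (hg j)]; exact hIc j
  -- the natural-weight case, via repetition
  have hnat : ∀ m : Fin n → ℕ, 0 < ∑ i, m i →
      g0 ((∑ i, (m i : ℝ) * f0 (φ (x i))) / ∑ i, (m i : ℝ)) ≤
        Φ (fun j => g j ((∑ i, (m i : ℝ) * f j (x i j)) / ∑ i, (m i : ℝ))) := by
    intro m hm
    set L := repList m x with hL
    have hlen : ((L.length : ℕ) : ℝ) = ∑ i, (m i : ℝ) := by
      rw [hL, repList_length]; push_cast; rfl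
    have hmem : ∀ t (j : Fin k), L.get t j ∈ I j := by
      intro t j
      have hmemL : L.get t ∈ L := by exact L.get_mem t
      obtain ⟨i, hi⟩ := repList_mem hmemL
      rw [hi]; exact hx i j
    have hkey0 : ∑ t, f0 (φ (L.get t)) = ∑ i, (m i : ℝ) * f0 (φ (x i)) :=
      (sum_fin_get L (fun v => f0 (φ v))).trans (repList_map_sum m x _)
    have hkey : ∀ j : Fin k, ∑ t, f j (L.get t j) = ∑ i, (m i : ℝ) * f j (x i j) :=
      fun j => (sum_fin_get L (fun v => f j (v j))).trans (repList_map_sum m x _)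
    have hLpos : 0 < L.length := by rw [hL, repList_length]; exact hm
    have h := ha L.length hLpos L.get hmem
    rw [hkey0, hlen] at h
    have harg : (fun j => g j ((∑ t, f j (L.get t j)) / ∑ i, (m i : ℝ))) =
        (fun j => g j ((∑ i, (m i : ℝ) * f j (x i j)) / ∑ i, (m i : ℝ))) := by
      funext j; rw [hkey j]
    rwa [harg] at h
  -- sequence of discretized weights
  have hWten : ∀ i, Filter.Tendsto
      (fun t : ℕ => ((⌊lam i * ((t:ℝ)+1)⌋₊ : ℝ) / ((t:ℝ)+1))) Filter.atTop (nhds (lam i)) := by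
    intro i
    have hlow : Filter.Tendsto (fun t : ℕ => lam i - 1 / ((t:ℝ)+1)) Filter.atTop
        (nhds (lam i)) := by
      have := tendsto_one_div_add_atTop_nhds_zero_nat.const_sub (lam i)
      simpa using this
    refine tendsto_of_tendsto_of_tendsto_of_le_of_le hlow tendsto_const_nhds ?_ ?_
    · intro t
      have htp : (0:ℝ) < (t:ℝ)+1 := by positivity
      have h1 : lam i * ((t:ℝ)+1) - 1 < (⌊lam i * ((t:ℝ)+1)⌋₊ : ℝ) :=
        Nat.sub_one_lt_floor _
      calc lam i - 1 / ((t:ℝ)+1) = (lam i * ((t:ℝ)+1) - 1) / ((t:ℝ)+1) := by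
            field_simp
        _ ≤ (⌊lam i * ((t:ℝ)+1)⌋₊ : ℝ) / ((t:ℝ)+1) := by gcongr
    · intro t
      have htp : (0:ℝ) < (t:ℝ)+1 := by positivity
      rw [div_le_iff₀ htp]
      exact Nat.floor_le (mul_nonneg (hlam i) (by positivity))
  have hWnn : ∀ (t : ℕ) i, 0 ≤ ((⌊lam i * ((t:ℝ)+1)⌋₊ : ℝ) / ((t:ℝ)+1)) := by
    intro t i; positivity
  have hevnat : ∀ᶠ t : ℕ in Filter.atTop, 0 < ∑ i, ⌊lam i * ((t:ℝ)+1)⌋₊ := by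
    filter_upwards [Filter.eventually_ge_atTop ⌈1 / lam i0⌉₊] with t ht
    have h2 : 1 / lam i0 ≤ (t:ℝ)+1 := by
      refine le_trans (Nat.le_ceil _) ?_
      have : (⌈1 / lam i0⌉₊ : ℝ) ≤ (t : ℝ) := by exact_mod_cast ht
      linarith
    have h1 : (1:ℝ) ≤ lam i0 * ((t:ℝ)+1) := by
      rw [div_le_iff₀ hi0] at h2
      linarith [h2]
    have h3 : 1 ≤ ⌊lam i0 * ((t:ℝ)+1)⌋₊ := Nat.le_floor (by exact_mod_cast h1)
    exact lt_of_lt_of_le h3 (Finset.single_le_sum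
      (f := fun i => ⌊lam i * ((t:ℝ)+1)⌋₊) (fun i _ => Nat.zero_le _)
      (Finset.mem_univ i0))
  have hWpos : ∀ᶠ t : ℕ in Filter.atTop,
      0 < ∑ i, ((⌊lam i * ((t:ℝ)+1)⌋₊ : ℝ) / ((t:ℝ)+1)) := by
    filter_upwards [hevnat] with t ht
    have htp : (0:ℝ) < (t:ℝ)+1 := by positivity
    have hsb : (0:ℝ) < ∑ i, (⌊lam i * ((t:ℝ)+1)⌋₊ : ℝ) := by exact_mod_cast ht
    rw [← Finset.sum_div]
    exact div_pos hsb htp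
  -- eventual inequality along the sequence
  have hval : ∀ᶠ t : ℕ in Filter.atTop,
      g0 ((∑ i, ((⌊lam i * ((t:ℝ)+1)⌋₊ : ℝ) / ((t:ℝ)+1)) * f0 (φ (x i))) /
            ∑ i, ((⌊lam i * ((t:ℝ)+1)⌋₊ : ℝ) / ((t:ℝ)+1))) ≤
        Φ (fun j => g j ((∑ i, ((⌊lam i * ((t:ℝ)+1)⌋₊ : ℝ) / ((t:ℝ)+1)) * f j (x i j)) /
            ∑ i, ((⌊lam i * ((t:ℝ)+1)⌋₊ : ℝ) / ((t:ℝ)+1)))) := by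
    filter_upwards [hevnat] with t ht
    have hd : ((t:ℝ)+1) ≠ 0 := by positivity
    simp only [wavg_scale hd]
    exact hnat (fun i => ⌊lam i * ((t:ℝ)+1)⌋₊) ht
  -- limits
  have h0 := tendsto_g_avg hlam hpos hWnn hWten hWpos hc0 ha0
  have hj := fun j => tendsto_g_avg hlam hpos hWnn hWten hWpos (hcj j) (hbj j)
  have huInf : (fun j => g j ((∑ i, lam i * f j (x i j)) / ∑ i, lam i)) ∈
      Set.univ.pi I := by
    intro j _
    exact (hg j).1 (hj j).2.1
  have htendu : Filter.Tendsto
      (fun t : ℕ => (fun j => g j ((∑ i, ((⌊lam i * ((t:ℝ)+1)⌋₊ : ℝ) / ((t:ℝ)+1)) * f j (x i j)) /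
            ∑ i, ((⌊lam i * ((t:ℝ)+1)⌋₊ : ℝ) / ((t:ℝ)+1)))))
      Filter.atTop
      (nhdsWithin (fun j => g j ((∑ i, lam i * f j (x i j)) / ∑ i, lam i)) (Set.univ.pi I)) := by
    refine tendsto_nhdsWithin_of_tendsto_nhds_of_eventually_within _ ?_ ?_
    · exact tendsto_pi_nhds.2 fun j => (hj j).1
    · have := Filter.eventually_all.2 fun j : Fin k => (hj j).2.2
      filter_upwards [this] with t ht
      intro j _
      exact (hg j).1 (ht j)
  refine le_of_forall_gt_imp_ge_of_dense fun y hy => ?_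
  have husc := hΦusc _ huInf y hy
  have hev2 := htendu.eventually husc
  refine le_of_tendsto h0.1 ?_
  filter_upwards [hval, hev2] with t h1 h2
  exact h1.trans h2.le
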